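/- For every finite subset {g_1, …, g_n} of D there exist nontrivial g, h ∈ F' such that g commutes with every g_i, h commutes with every g_i, and g h ≠ h g. -/

import Mathlib

open Set

noncomputable section

/-- `d` is an `N`-adic rational: of the form `a / N ^ k`. -/
def NAdic (N : ℕ) (d : ℝ) : Prop := ∃ a k : ℕ, d = (a : ℝ) / (N : ℝ) ^ k

/-- Membership in the generalized Thompson group `F(N)`, modeled as permutations of `ℝ`
that are the identity outside `[0,1]`: continuous, strictly increasing, fixing `0` and `1`,
differentiable except at finitely many `N`-adic points of `[0,1]`, with derivatives
integer powers of `N`. -/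
def InFN (N : ℕ) (f : Equiv.Perm ℝ) : Prop :=
  Continuous f ∧ StrictMono f ∧
  (∀ x : ℝ, x ∉ Icc (0:ℝ) 1 → f x = x) ∧
  f 0 = 0 ∧ f 1 = 1 ∧
  ∃ s : Finset ℝ, (∀ x ∈ s, x ∈ Icc (0:ℝ) 1 ∧ NAdic N x) ∧
    ∀ x ∈ Icc (0:ℝ) 1, x ∉ s → ∃ m : ℤ, HasDerivAt (⇑f) ((N : ℝ) ^ m) x

/-- Membership in `F' ⊆ F(N)`: elements that are the identity near both `0` and `1`. -/
def InF' (N : ℕ) (f : Equiv.Perm ℝ) : Prop :=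
  InFN N f ∧ ∃ ε δ : ℝ, 0 < ε ∧ ε < 1 ∧ 0 < δ ∧ δ < 1 ∧
    (∀ x ∈ Icc (0:ℝ) ε, f x = x) ∧ (∀ x ∈ Icc δ (1:ℝ), f x = x)

/-- Membership in `D ⊆ F(N)`: elements that are the identity near `1`. -/
def InD (N : ℕ) (f : Equiv.Perm ℝ) : Prop :=
  InFN N f ∧ ∃ δ : ℝ, 0 < δ ∧ δ < 1 ∧ ∀ x ∈ Icc δ (1:ℝ), f x = x

/-- The piecewise linear map `A_{d,p}`. -/
def A (N : ℕ) (d : ℝ) (p : ℤ) (x : ℝ) : ℝ :=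
  if x ≤ d then x / (N : ℝ) ^ p
  else if x ≤ 1 - d / (N : ℝ) ^ p then x - d + d / (N : ℝ) ^ p
  else (N : ℝ) ^ p * x + 1 - (N : ℝ) ^ p

namespace St10
open Filter

noncomputable def bfun (N : ℕ) (α w : ℝ) (x : ℝ) : ℝ :=
  max x (min (α + N * (x - α)) (min (x + w * (N - 1) / N ^ 2) ((α + w) + (x - (α + w)) / N)))

variable {N : ℕ} {α w : ℝ}

lemma hNr (hN : 2 ≤ N) : (2:ℝ) ≤ (N:ℝ) := by exact_mod_cast hN

lemma bfun_sm (hN : 2 ≤ N) : StrictMono (bfun N α w) := by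
  have h2 := hNr hN
  have hN0 : (0:ℝ) < N := by linarith
  intro a b hab
  unfold bfun
  apply max_lt_max hab
  apply min_lt_min (by nlinarith)
  apply min_lt_min (by nlinarith)
  have : (a - (α+w))/N < (b - (α+w))/N :=
    div_lt_div_of_pos_right (by linarith) hN0
  linarith

lemma bfun_cont : Continuous (bfun N α w) := by
  unfold bfun; fun_prop

lemma bfun_id_left (hN : 2 ≤ N) {x : ℝ} (hx : x ≤ α) : bfun N α w x = x := by
  have h2 := hNr hN
  have hN0 : (0:ℝ) < N := by linarith
  apply max_eq_left
  refine le_trans (min_le_left _ _) ?_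
  nlinarith

lemma bfun_id_right (hN : 2 ≤ N) {x : ℝ} (hx : α + w ≤ x) : bfun N α w x = x := by
  have h2 := hNr hN
  have hN0 : (0:ℝ) < N := by linarith
  apply max_eq_left
  refine le_trans (le_trans (min_le_right _ _) (min_le_right _ _)) ?_
  have : (x - (α+w))/N ≤ x - (α+w) := by
    rw [div_le_iff₀ hN0]; nlinarith
  linarith

lemma bfun_gt (hN : 2 ≤ N) (hw : 0 < w) {x : ℝ} (h1 : α < x) (h2 : x < α + w) :
    x < bfun N α w x := by
  have hn2 := hNr hN
  have hN0 : (0:ℝ) < N := by linarith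
  refine lt_of_lt_of_le ?_ (le_max_right _ _)
  apply lt_min
  · nlinarith
  apply lt_min
  · have : 0 < w * (N-1)/N^2 := div_pos (by nlinarith) (by positivity)
    linarith
  · have : (x - (α+w))/N > x - (α+w) := by
      rw [gt_iff_lt, lt_div_iff₀ hN0]; nlinarith
    linarith

lemma bfun_eq1 (hN : 2 ≤ N) (hw : 0 < w) {x : ℝ} (h1 : α ≤ x) (h2 : x ≤ α + w / N^2) :
    bfun N α w x = α + N * (x - α) := by
  have hn2 := hNr hN
  have hN0 : (0:ℝ) < N := by linarith
  have hxw : (x - α) * N^2 ≤ w := by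
    rw [← le_div_iff₀ (by positivity)]; linarith
  have l12 : α + N * (x - α) ≤ x + w * (N - 1) / N ^ 2 := by
    rw [← sub_nonneg]; field_simp
    nlinarith
  have l13 : α + N * (x - α) ≤ (α + w) + (x - (α + w)) / N := by
    rw [← sub_nonneg]; field_simp
    nlinarith
  unfold bfun
  rw [min_eq_left (le_min l12 l13), max_eq_right (by nlinarith)]

lemma bfun_eq2 (hN : 2 ≤ N) (hw : 0 < w) {x : ℝ} (h1 : α + w / N^2 ≤ x)
    (h2 : x ≤ α + w - w / N) : bfun N α w x = x + w * (N - 1) / N ^ 2 := by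
  have hn2 := hNr hN
  have hN0 : (0:ℝ) < N := by linarith
  have hxw : w ≤ (x - α) * N^2 := by
    rw [← div_le_iff₀ (by positivity)]; linarith
  have hxw2 : (x - α) * N ≤ w * N - w := by
    have h : x - α ≤ w - w/N := by linarith
    have h2' := mul_le_mul_of_nonneg_right h hN0.le
    have h3 : (w - w/N)*N = w*N - w := by field_simp
    rw [h3] at h2'
    linarith
  have l21 : x + w * (N - 1) / N ^ 2 ≤ α + N * (x - α) := by
    rw [← sub_nonneg]; field_simp
    nlinarith
  have l23 : x + w * (N - 1) / N ^ 2 ≤ (α + w) + (x - (α + w)) / N := by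
    rw [← sub_nonneg]; field_simp
    nlinarith [mul_le_mul_of_nonneg_right hxw2 (mul_nonneg hN0.le (by linarith : (0:ℝ) ≤ (N:ℝ) - 1))]
  have hge : x ≤ x + w * (N - 1) / N ^ 2 := by
    have : 0 ≤ w * (N-1)/N^2 := le_of_lt (div_pos (by nlinarith) (by positivity))
    linarith
  unfold bfun
  rw [min_eq_left l23, min_eq_right l21, max_eq_right hge]

lemma bfun_eq3 (hN : 2 ≤ N) (hw : 0 < w) {x : ℝ} (h1 : α + w - w / N ≤ x)
    (h2 : x ≤ α + w) : bfun N α w x = (α + w) + (x - (α + w)) / N := by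
  have hn2 := hNr hN
  have hN0 : (0:ℝ) < N := by linarith
  have hxw : w * N - w ≤ (x - α) * N := by
    have h : w - w/N ≤ x - α := by linarith
    have h2' := mul_le_mul_of_nonneg_right h hN0.le
    have h3 : (w - w/N)*N = w*N - w := by field_simp
    rw [h3] at h2'
    linarith
  have ht : x - α ≤ w := by linarith
  have l32 : (α + w) + (x - (α + w)) / N ≤ x + w * (N - 1) / N ^ 2 := by
    rw [← sub_nonneg]; field_simp
    nlinarith [mul_le_mul_of_nonneg_right hxw (mul_nonneg hN0.le (by linarith : (0:ℝ) ≤ (N:ℝ) - 1))]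
  have l31 : (α + w) + (x - (α + w)) / N ≤ α + N * (x - α) := by
    rw [← sub_nonneg]; field_simp
    nlinarith [mul_le_mul_of_nonneg_left hxw hN0.le,
      mul_nonneg (mul_nonneg hw.le hN0.le) (by linarith : (0:ℝ) ≤ (N:ℝ) - 2), ht]
  have hge : x ≤ (α + w) + (x - (α + w)) / N := by
    rw [← sub_nonneg]; field_simp
    nlinarith
  unfold bfun
  rw [min_eq_right l32, min_eq_right l31, max_eq_right hge]


lemma bfun_deriv (hN : 2 ≤ N) (hw : 0 < w) {x : ℝ}
    (hx1 : x ≠ α) (hx2 : x ≠ α + w / N^2) (hx3 : x ≠ α + w - w / N) (hx4 : x ≠ α + w) :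
    ∃ m : ℤ, HasDerivAt (bfun N α w) ((N : ℝ) ^ m) x := by
  have hn2 := hNr hN
  have hN0 : (0:ℝ) < N := by linarith
  rcases hx1.lt_or_gt with h | h
  · -- x < α
    refine ⟨0, ?_⟩
    rw [zpow_zero]
    have hev : bfun N α w =ᶠ[nhds x] (fun y => y) :=
      eventually_of_mem (Iio_mem_nhds h) (fun y hy => bfun_id_left hN (le_of_lt hy))
    exact hev.hasDerivAt_iff.mpr (hasDerivAt_id' x)
  rcases hx4.lt_or_gt with h4 | h4
  swap
  · -- α + w < x
    refine ⟨0, ?_⟩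
    rw [zpow_zero]
    have hev : bfun N α w =ᶠ[nhds x] (fun y => y) :=
      eventually_of_mem (Ioi_mem_nhds h4) (fun y hy => bfun_id_right hN (le_of_lt hy))
    exact hev.hasDerivAt_iff.mpr (hasDerivAt_id' x)
  rcases hx2.lt_or_gt with h2 | h2
  · -- α < x < p1
    refine ⟨1, ?_⟩
    rw [zpow_one]
    have hev : bfun N α w =ᶠ[nhds x] (fun y => α + N * (y - α)) :=
      eventually_of_mem (Ioo_mem_nhds h h2)
        (fun y hy => bfun_eq1 hN hw hy.1.le hy.2.le)
    refine hev.hasDerivAt_iff.mpr ?_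
    have := (((hasDerivAt_id x).sub_const α).const_mul (N:ℝ)).const_add α
    simpa using this
  rcases hx3.lt_or_gt with h3 | h3
  · -- p1 < x < p2
    refine ⟨0, ?_⟩
    rw [zpow_zero]
    have hev : bfun N α w =ᶠ[nhds x] (fun y => y + w * (N - 1) / N ^ 2) :=
      eventually_of_mem (Ioo_mem_nhds h2 h3)
        (fun y hy => bfun_eq2 hN hw hy.1.le hy.2.le)
    exact hev.hasDerivAt_iff.mpr ((hasDerivAt_id x).add_const _)
  · -- p2 < x < β
    refine ⟨-1, ?_⟩
    have hev : bfun N α w =ᶠ[nhds x] (fun y => (α + w) + (y - (α + w)) / N) :=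
      eventually_of_mem (Ioo_mem_nhds h3 h4)
        (fun y hy => bfun_eq3 hN hw hy.1.le hy.2.le)
    refine hev.hasDerivAt_iff.mpr ?_
    have := (((hasDerivAt_id x).sub_const (α+w)).div_const (N:ℝ)).const_add (α+w)
    rw [zpow_neg_one]
    simpa [one_div] using this

lemma bfun_surj (hN : 2 ≤ N) : Function.Surjective (bfun N α w) := by
  apply bfun_cont.surjective
  · apply Tendsto.congr' _ tendsto_id
    filter_upwards [eventually_ge_atTop (α + w)] with y hy
    exact (bfun_id_right hN hy).symm
  · apply Tendsto.congr' _ tendsto_id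
    filter_upwards [eventually_le_atBot α] with y hy
    exact (bfun_id_left hN hy).symm

noncomputable def bperm (N : ℕ) (α w : ℝ) (hN : 2 ≤ N) : Equiv.Perm ℝ :=
  Equiv.ofBijective (bfun N α w) ⟨(bfun_sm hN).injective, bfun_surj hN⟩

lemma bperm_apply (hN : 2 ≤ N) (x : ℝ) : bperm N α w hN x = bfun N α w x := rfl

lemma bperm_inFN (hN : 2 ≤ N) (hw : 0 < w) (hα : 0 ≤ α) (h1 : α + w ≤ 1)
    (na1 : NAdic N α) (na2 : NAdic N (α + w / N^2)) (na3 : NAdic N (α + w - w / N))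
    (na4 : NAdic N (α + w)) : InFN N (bperm N α w hN) := by
  classical
  have hn2 := hNr hN
  have hN0 : (0:ℝ) < N := by linarith
  have hq1 : 0 < w / (N:ℝ)^2 := by positivity
  have hq2 : w / (N:ℝ)^2 ≤ w / 4 := by
    rw [div_le_div_iff₀ (by positivity) (by norm_num)]
    nlinarith [mul_le_mul_of_nonneg_left (by nlinarith : (4:ℝ) ≤ (N:ℝ)^2) hw.le]
  have hq3 : 0 < w / (N:ℝ) := by positivity
  have hq4 : w / (N:ℝ) ≤ w / 2 := by
    rw [div_le_div_iff₀ hN0 (by norm_num)]; nlinarith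
  refine ⟨bfun_cont, bfun_sm hN, ?_, ?_, ?_, ?_⟩
  · intro x hx
    rw [mem_Icc] at hx; push_neg at hx
    by_cases hx0 : 0 ≤ x
    · exact bfun_id_right hN (by linarith [hx hx0])
    · exact bfun_id_left hN (by push_neg at hx0; linarith)
  · exact bfun_id_left hN hα
  · exact bfun_id_right hN (by linarith)
  · refine ⟨{α, α + w / N^2, α + w - w / N, α + w}, ?_, ?_⟩
    · intro x hx
      simp only [Finset.mem_insert, Finset.mem_singleton] at hx
      rcases hx with rfl | rfl | rfl | rfl
      · exact ⟨⟨hα, by linarith⟩, na1⟩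
      · exact ⟨⟨by linarith, by linarith⟩, na2⟩
      · exact ⟨⟨by linarith, by linarith⟩, na3⟩
      · exact ⟨⟨by linarith, by linarith⟩, na4⟩
    · intro x _ hx
      simp only [Finset.mem_insert, Finset.mem_singleton, not_or] at hx
      exact bfun_deriv hN hw hx.1 hx.2.1 hx.2.2.1 hx.2.2.2

lemma bperm_inF' (hN : 2 ≤ N) (hw : 0 < w) (hα : 0 < α) (h1 : α + w < 1)
    (na1 : NAdic N α) (na2 : NAdic N (α + w / N^2)) (na3 : NAdic N (α + w - w / N))
    (na4 : NAdic N (α + w)) : InF' N (bperm N α w hN) := by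
  refine ⟨bperm_inFN hN hw hα.le h1.le na1 na2 na3 na4, α, α + w, hα, by linarith, by linarith,
    h1, ?_, ?_⟩
  · intro x hx; exact bfun_id_left hN hx.2
  · intro x hx; exact bfun_id_right hN hx.1

lemma bperm_comm (hN : 2 ≤ N) {e : ℝ} (s : Equiv.Perm ℝ) (hsm : StrictMono ⇑s)
    (hout : ∀ x ∉ Icc (0:ℝ) 1, s x = x) (hid : ∀ x ∈ Icc e (1:ℝ), s x = x)
    (heα : e ≤ α) (hα1 : α ≤ 1) :
    s * bperm N α w hN = bperm N α w hN * s := by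
  have hs' : ∀ x : ℝ, e ≤ x → s x = x := by
    intro x hx
    by_cases hx1 : x ≤ 1
    · exact hid x ⟨hx, hx1⟩
    · exact hout x (by rw [mem_Icc]; push_neg; intro _; linarith)
  have hsα : s α = α := hs' α heα
  have hbα : bfun N α w α = α := bfun_id_left hN le_rfl
  ext y
  simp only [Equiv.Perm.mul_apply, bperm_apply]
  by_cases hy : α ≤ y
  · have h1 : α ≤ bfun N α w y := by
      have h2 := (bfun_sm (α := α) (w := w) hN).monotone hy
      rw [hbα] at h2; exact h2
    rw [hs' _ (le_trans heα h1), hs' _ (le_trans heα hy)]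
  · push_neg at hy
    have h1 : s y < α := by
      rw [← hsα]; exact hsm hy
    rw [bfun_id_left hN hy.le, bfun_id_left hN h1.le]

lemma nadic_aux (N k j m : ℕ) (hN : 1 ≤ N) (hm : m ≤ N ^ j) :
    NAdic N (1 - 1/(N:ℝ)^k + (m:ℝ)/(N:ℝ)^(k+j)) := by
  have hN0 : (0:ℝ) < N := by exact_mod_cast hN
  have hle : N ^ j ≤ N ^ (k+j) := Nat.pow_le_pow_right hN (by omega)
  refine ⟨N ^ (k+j) - N ^ j + m, k + j, ?_⟩
  have hc : ((N ^ (k+j) - N ^ j + m : ℕ) : ℝ) = (N:ℝ)^(k+j) - (N:ℝ)^j + m := by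
    push_cast [Nat.cast_sub hle]; ring
  rw [hc, pow_add]
  field_simp

lemma exists_common_delta (N : ℕ) (S : Finset (Equiv.Perm ℝ)) (hS : ∀ s ∈ S, InD N s) :
    ∃ d : ℝ, 1/2 ≤ d ∧ d < 1 ∧ ∀ s ∈ S, ∀ x ∈ Icc d (1:ℝ), s x = x := by
  classical
  induction S using Finset.induction_on with
  | empty => exact ⟨1/2, le_rfl, by norm_num, by simp⟩
  | @insert a T hnotmem ih =>
    obtain ⟨d, hd2, hd1, hdid⟩ := ih (fun s hs => hS s (Finset.mem_insert_of_mem hs))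
    obtain ⟨_, δa, hδa0, hδa1, hδaid⟩ := hS a (Finset.mem_insert_self a T)
    refine ⟨max d δa, le_trans hd2 (le_max_left _ _), max_lt hd1 hδa1, ?_⟩
    intro s hs x hx
    rcases Finset.mem_insert.mp hs with rfl | hs'
    · exact hδaid x ⟨le_trans (le_max_right _ _) hx.1, hx.2⟩
    · exact hdid s hs' x ⟨le_trans (le_max_left _ _) hx.1, hx.2⟩

end St10

open St10

/-- for every finite subset of `D` there are nontrivial `g, h ∈ F'`
commuting with every element of the subset but not with each other. -/
theorem stmt10 (N : ℕ) (hN : 2 ≤ N) (S : Finset (Equiv.Perm ℝ)) (hS : ∀ x ∈ S, InD N x) :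
    ∃ g h : Equiv.Perm ℝ, InF' N g ∧ InF' N h ∧ g ≠ 1 ∧ h ≠ 1 ∧
      (∀ x ∈ S, x * g = g * x) ∧ (∀ x ∈ S, x * h = h * x) ∧ g * h ≠ h * g := by
  have hn2 : (2:ℝ) ≤ N := by exact_mod_cast hN
  have hN0 : (0:ℝ) < N := by linarith
  have hNe : (N:ℝ) ≠ 0 := ne_of_gt hN0
  have hN1 : 1 ≤ N := by omega
  obtain ⟨d, hd2, hd1, hdid⟩ := exists_common_delta N S hS
  obtain ⟨k, hk⟩ : ∃ k : ℕ, (1/(N:ℝ))^k < 1 - d :=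
    exists_pow_lt_of_lt_one (by linarith) (by rw [div_lt_one hN0]; linarith)
  rw [div_pow, one_pow] at hk
  set c : ℝ := 1 - 1/(N:ℝ)^k with hc
  set u : ℝ := 1/(N:ℝ)^(k+3) with huu
  have hNk : (0:ℝ) < (N:ℝ)^k := by positivity
  have hu : 0 < u := by rw [huu]; positivity
  have hdc : d < c := by rw [hc]; linarith
  have hc1 : c < 1 := by
    rw [hc]; have : 0 < 1/(N:ℝ)^k := by positivity
    linarith
  have hc0 : (0:ℝ) < c := by linarith
  have h8 : (8:ℝ) ≤ (N:ℝ)^3 := by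
    have := pow_le_pow_left₀ (by norm_num : (0:ℝ) ≤ 2) hn2 3
    norm_num at this; exact this
  have hue : (N:ℝ)^3 * u = 1/(N:ℝ)^k := by
    rw [huu, pow_add]; field_simp
  have hβ2 : c + 4*u < 1 := by
    have h4 : 4*u < (N:ℝ)^3 * u := by nlinarith
    rw [hue] at h4
    rw [hc]; linarith
  have hNnat8 : 8 ≤ N^3 := by
    calc (8:ℕ) = 2^3 := by norm_num
    _ ≤ N^3 := Nat.pow_le_pow_left hN 3
  have hN4 : 8*N ≤ N^4 := by
    calc 8*N ≤ N^3*N := Nat.mul_le_mul_right N hNnat8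
    _ = N^4 := by ring
  have hN5 : 8*N^2 ≤ N^5 := by
    calc 8*N^2 ≤ N^3*N^2 := Nat.mul_le_mul_right (N^2) hNnat8
    _ = N^5 := by ring
  have hNsq1 : 1 ≤ N^2 := Nat.one_le_pow _ _ (by omega)
  have key : ∀ (j m : ℕ), m ≤ N^j → ∀ x : ℝ, x = c + m/(N:ℝ)^(k+j) → NAdic N x := by
    intro j m hm x hx
    rw [hx, hc]
    exact nadic_aux N k j m hN1 hm
  -- the two permutations
  refine ⟨bperm N c (3*u) hN, bperm N (c + 2*u) (2*u) hN, ?_, ?_, ?_, ?_, ?_, ?_, ?_⟩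
  · -- g ∈ F'
    refine bperm_inF' hN (by linarith) hc0 (by linarith) ?_ ?_ ?_ ?_
    · exact key 0 0 (by norm_num) c (by push_cast; simp)
    · refine key 5 3 (by linarith [hNnat8]) _ ?_
      push_cast; rw [huu]; field_simp; try ring
    · refine key 4 (3*N-3) (by omega) _ ?_
      push_cast [Nat.cast_sub (by omega : 3 ≤ 3*N)]
      rw [huu]; field_simp; try ring
    · refine key 3 3 (by omega) _ ?_
      push_cast; rw [huu]; field_simp; try ring
  · -- h ∈ F'
    refine bperm_inF' hN (by linarith) (by linarith) (by linarith) ?_ ?_ ?_ ?_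
    · refine key 3 2 (by omega) _ ?_
      push_cast; rw [huu]; field_simp; try ring
    · refine key 5 (2*N^2+2) (by linarith [hN5, hNsq1]) _ ?_
      push_cast; rw [huu]; field_simp; try ring
    · refine key 4 (4*N-2) (by omega) _ ?_
      push_cast [Nat.cast_sub (by omega : 2 ≤ 4*N)]
      rw [huu]; field_simp; try ring
    · refine key 3 4 (by omega) _ ?_
      push_cast; rw [huu]; field_simp; try ring
  · -- g ≠ 1
    intro hcon
    have h1 := bfun_gt (α := c) (w := 3*u) hN (by linarith) (x := c + u) (by linarith) (by linarith)
    have h2 : (bperm N c (3*u) hN) (c+u) = c+u := by rw [hcon]; simp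
    rw [bperm_apply] at h2
    linarith
  · -- h ≠ 1
    intro hcon
    have h1 := bfun_gt (α := c + 2*u) (w := 2*u) hN (by linarith) (x := c + 3*u)
      (by linarith) (by linarith)
    have h2 : (bperm N (c+2*u) (2*u) hN) (c+3*u) = c+3*u := by rw [hcon]; simp
    rw [bperm_apply] at h2
    linarith
  · -- commutes with S
    intro x hxS
    exact bperm_comm hN x ((hS x hxS).1).2.1 ((hS x hxS).1).2.2.1 (hdid x hxS)
      (by linarith) (by linarith)
  · intro x hxS
    exact bperm_comm hN x ((hS x hxS).1).2.1 ((hS x hxS).1).2.2.1 (hdid x hxS)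
      (by linarith) (by linarith)
  · -- g h ≠ h g
    intro hcon
    have e1 : bfun N (c+2*u) (2*u) (c+2*u) = c+2*u := bfun_id_left hN le_rfl
    have e2 : c+2*u < bfun N c (3*u) (c+2*u) :=
      bfun_gt hN (by linarith) (by linarith) (by linarith)
    have e3 : bfun N c (3*u) (c+2*u) < c + 3*u := by
      have h5 := bfun_sm (N := N) (α := c) (w := 3*u) hN
        (show c+2*u < c+3*u by linarith)
      rwa [bfun_id_right hN (le_refl (c+3*u))] at h5
    have e4 : bfun N c (3*u) (c+2*u) < bfun N (c+2*u) (2*u) (bfun N c (3*u) (c+2*u)) :=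
      bfun_gt hN (by linarith) (by linarith) (by linarith)
    have e5 := DFunLike.congr_fun hcon (c+2*u)
    simp only [Equiv.Perm.mul_apply, bperm_apply] at e5
    rw [e1] at e5
    linarith [e5, e4]
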